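/- The formal power series T(x) = ∑_{n≥0} (1/(n+1)) C(3n+1, n) x^n over ℚ satisfies the functional equation T = 1 + 2x·T^2 − x^2·T^3. -/

import Mathlib

open PowerSeries Finset
open scoped Nat

/-- Generating function of T-Motzkin paths: `T(x) = ∑_{n ≥ 0} C(3n+1,n)/(n+1) xⁿ`. -/
noncomputable def T : PowerSeries ℚ :=
  PowerSeries.mk fun n => (Nat.choose (3 * n + 1) n : ℚ) / (n + 1)


noncomputable def gg : ℕ → ℚ
  | 0 => 1
  | n + 1 =>
      2 * ∑ i ∈ (Finset.range (n + 1)).attach, gg i * gg (n - i) -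
        ∑ i ∈ (Finset.range n).attach,
          ∑ j ∈ (Finset.range (n - (i : ℕ))).attach, gg i * (gg j * gg (n - 1 - i - j))
  decreasing_by
  all_goals
    try have hi := i.2
    try have hj := j.2
    simp only [Finset.mem_range] at *
    omega

lemma gg_zero : gg 0 = 1 := by rw [gg]

lemma gg_succ (n : ℕ) : gg (n+1) =
    2 * ∑ i ∈ Finset.range (n+1), gg i * gg (n - i) -
      ∑ i ∈ Finset.range n, ∑ j ∈ Finset.range (n - i), gg i * (gg j * gg (n - 1 - i - j)) := by
  rw [gg]
  rw [Finset.sum_attach (range (n+1)) (fun i => gg i * gg (n - i))]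
  congr 1
  rw [← Finset.sum_attach (range n)
    (fun i => ∑ j ∈ Finset.range (n - i), gg i * (gg j * gg (n - 1 - i - j)))]
  exact Finset.sum_congr rfl fun i _ =>
    Finset.sum_attach (range (n - (i:ℕ))) (fun j => gg i * (gg j * gg (n - 1 - i - j)))

noncomputable def GG : PowerSeries ℚ := PowerSeries.mk gg

lemma coeff_GG (n : ℕ) : (coeff (R := ℚ) n) GG = gg n := coeff_mk n gg

lemma coeff_GG_sq (n : ℕ) :
    (coeff (R := ℚ) n) (GG ^ 2) = ∑ i ∈ Finset.range (n+1), gg i * gg (n - i) := by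
  rw [pow_two, coeff_mul, Finset.Nat.sum_antidiagonal_eq_sum_range_succ_mk]
  simp [coeff_GG]

lemma coeff_GG_cube (n : ℕ) :
    (coeff (R := ℚ) n) (GG ^ 3) =
      ∑ i ∈ Finset.range (n+1), ∑ j ∈ Finset.range (n - i + 1), gg i * (gg j * gg (n - i - j)) := by
  have h3 : GG ^ 3 = GG * GG ^ 2 := by ring
  rw [h3, coeff_mul, Finset.Nat.sum_antidiagonal_eq_sum_range_succ_mk]
  refine Finset.sum_congr rfl fun i _ => ?_
  rw [coeff_GG, coeff_GG_sq, Finset.mul_sum]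

lemma GG_cubic : GG = 1 + 2 * X * GG ^ 2 - X ^ 2 * GG ^ 3 := by
  ext n
  rw [map_sub, map_add]
  cases n with
  | zero =>
    simp [coeff_GG, gg_zero, coeff_zero_eq_constantCoeff, pow_two]
  | succ n =>
    have h2 : (coeff (R := ℚ) (n+1)) (2 * X * GG ^ 2) = 2 * (coeff (R := ℚ) n) (GG ^ 2) := by
      have : (2 : ℚ⟦X⟧) * X * GG ^ 2 = X * (C (R := ℚ) 2 * GG ^ 2) := by
        simp only [map_ofNat]; ring
      rw [this, coeff_succ_X_mul, coeff_C_mul]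
    rw [h2, coeff_GG, coeff_one, if_neg (Nat.succ_ne_zero n), gg_succ, coeff_GG_sq]
    cases n with
    | zero =>
      simp [coeff_X_pow_mul']
    | succ m =>
      have h3 : (coeff (R := ℚ) (m + 1 + 1)) (X ^ 2 * GG ^ 3) = (coeff (R := ℚ) m) (GG ^ 3) :=
        coeff_X_pow_mul (GG ^ 3) 2 m
      rw [h3, coeff_GG_cube]
      have hs : ∑ i ∈ Finset.range (m+1), ∑ j ∈ Finset.range (m - i + 1), gg i * (gg j * gg (m - i - j))
          = ∑ i ∈ Finset.range (m+1), ∑ j ∈ Finset.range (m + 1 - i), gg i * (gg j * gg (m + 1 - 1 - i - j)) := by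
        refine Finset.sum_congr rfl fun i hi => ?_
        rw [Finset.mem_range] at hi
        have : m - i + 1 = m + 1 - i := by omega
        rw [this]
        refine Finset.sum_congr rfl fun j hj => ?_
        norm_num
      rw [hs]
      ring

noncomputable def G1 : PowerSeries ℚ := d⁄dX ℚ GG
noncomputable def G2 : PowerSeries ℚ := d⁄dX ℚ G1

lemma deriv1 : (3*X^2*GG^2 - 4*X*GG + 1) * G1 = 2*GG^2 - 2*X*GG^3 := by
  have h2 : (d⁄dX ℚ) (2 : ℚ⟦X⟧) = 0 := by
    rw [show (2:ℚ⟦X⟧) = ((2:ℕ):ℚ⟦X⟧) by norm_num]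
    exact Derivation.map_natCast (d⁄dX ℚ) 2
  have h := congrArg (d⁄dX ℚ) GG_cubic
  simp only [map_sub, map_add, Derivation.leibniz, Derivation.leibniz_pow, derivative_X,
    Derivation.map_one_eq_zero, smul_eq_mul, mul_one, mul_zero, zero_add, add_zero,
    h2, zero_mul, nsmul_eq_mul, Nat.cast_ofNat] at h
  rw [show d⁄dX ℚ GG = G1 from rfl] at h
  linear_combination h

lemma deriv2 : (6*X*GG^2 + 6*X^2*GG*G1 - 4*GG - 4*X*G1) * G1
    + (3*X^2*GG^2 - 4*X*GG + 1) * G2 = 4*GG*G1 - 2*GG^3 - 6*X*GG^2*G1 := by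
  have h2 : (d⁄dX ℚ) (2 : ℚ⟦X⟧) = 0 := by
    rw [show (2:ℚ⟦X⟧) = ((2:ℕ):ℚ⟦X⟧) by norm_num]
    exact Derivation.map_natCast (d⁄dX ℚ) 2
  have h3 : (d⁄dX ℚ) (3 : ℚ⟦X⟧) = 0 := by
    rw [show (3:ℚ⟦X⟧) = ((3:ℕ):ℚ⟦X⟧) by norm_num]
    exact Derivation.map_natCast (d⁄dX ℚ) 3
  have h4 : (d⁄dX ℚ) (4 : ℚ⟦X⟧) = 0 := by
    rw [show (4:ℚ⟦X⟧) = ((4:ℕ):ℚ⟦X⟧) by norm_num]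
    exact Derivation.map_natCast (d⁄dX ℚ) 4
  have h := congrArg (d⁄dX ℚ) deriv1
  simp only [map_sub, map_add, Derivation.leibniz, Derivation.leibniz_pow, derivative_X,
    Derivation.map_one_eq_zero, smul_eq_mul, mul_one, mul_zero, zero_add, add_zero,
    h2, h3, h4, zero_mul, nsmul_eq_mul, Nat.cast_ofNat] at h
  rw [show d⁄dX ℚ GG = G1 from rfl, show d⁄dX ℚ G1 = G2 from rfl] at h
  linear_combination h

lemma GG_ode : (4*X^2-27*X^3) * G2 + (10*X-81*X^2) * G1 + (2-24*X) * GG = 2 := by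
  have hu : constantCoeff (R := ℚ) (3*X^2*GG^2 - 4*X*GG + 1) = 1 := by
    simp [map_sub, map_add, map_mul, map_pow, constantCoeff_X]
  have hune : (3*X^2*GG^2 - 4*X*GG + 1 : ℚ⟦X⟧) ≠ 0 := by
    intro h; rw [h, map_zero] at hu; exact one_ne_zero hu.symm
  have key : (3*X^2*GG^2 - 4*X*GG + 1)^3 * ((4*X^2-27*X^3) * G2 + (10*X-81*X^2) * G1 + (2-24*X) * GG)
      = (3*X^2*GG^2 - 4*X*GG + 1)^3 * 2 := by
    linear_combination
      ((-243)*GG^4*X^7 + 36*GG^4*X^6 + 648*GG^3*X^6 + (-96)*GG^3*X^5 + (-594)*GG^2*X^5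
        + 88*GG^2*X^4 + 216*GG*X^4 + (-32)*GG*X^3 + (-27)*X^3 + 4*X^2) * deriv2 +
      (486*G1*GG^3*X^7 + (-72)*G1*GG^3*X^6 + (-972)*G1*GG^2*X^6 + 144*G1*GG^2*X^5
        + 594*G1*GG*X^5 + (-88)*G1*GG*X^4 + (-108)*G1*X^4 + 16*G1*X^3 + (-81)*GG^4*X^6
        + (-6)*GG^4*X^5 + 540*GG^3*X^5 + (-32)*GG^3*X^4 + (-810)*GG^2*X^4 + 76*GG^2*X^3
        + 432*GG*X^3 + (-48)*GG*X^2 + (-81)*X^2 + 10*X) * deriv1 +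
      ((-6)*GG^4*X^4 + 16*GG^3*X^3 + (-12)*GG^2*X^2 + 2) * GG_cubic
  exact mul_left_cancel₀ (pow_ne_zero 3 hune) key


noncomputable def Lop (f : ℚ⟦X⟧) : ℚ⟦X⟧ :=
  (4*X^2-27*X^3) * (d⁄dX ℚ (d⁄dX ℚ f)) + (10*X-81*X^2) * (d⁄dX ℚ f) + (2-24*X) * f

lemma coeff_CXk (a : ℚ) (k n : ℕ) (h : ℚ⟦X⟧) :
    coeff (R := ℚ) n ((C (R := ℚ) a * X^k) * h) = if k ≤ n then a * coeff (R := ℚ) (n-k) h else 0 := by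
  rw [mul_assoc, coeff_C_mul, coeff_X_pow_mul']
  split <;> simp

lemma Lop_expand (f : ℚ⟦X⟧) : Lop f =
    (C (R := ℚ) 4 * X^2) * (d⁄dX ℚ (d⁄dX ℚ f)) - (C (R := ℚ) 27 * X^3) * (d⁄dX ℚ (d⁄dX ℚ f))
    + ((C (R := ℚ) 10 * X^1) * (d⁄dX ℚ f) - (C (R := ℚ) 81 * X^2) * (d⁄dX ℚ f))
    + ((C (R := ℚ) 2 * X^0) * f - (C (R := ℚ) 24 * X^1) * f) := by
  simp only [Lop, map_ofNat, pow_one, pow_zero]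
  ring

lemma coeff_Lop (f : ℚ⟦X⟧) (n : ℕ) :
    coeff (R := ℚ) (n+1) (Lop f)
      = 2*(n+2)*(2*n+3) * coeff (R := ℚ) (n+1) f - 3*(3*n+2)*(3*n+4) * coeff (R := ℚ) n f := by
  rw [Lop_expand, map_add, map_add, map_sub, map_sub, map_sub]
  simp only [coeff_CXk, coeff_derivative]
  rcases n with _ | _ | m
  · norm_num; ring
  · norm_num; ring
  · have h2 : 2 ≤ m + 2 + 1 := by omega
    have h3 : 3 ≤ m + 2 + 1 := by omega
    have h1 : 1 ≤ m + 2 + 1 := by omega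
    rw [if_pos h2, if_pos h3, if_pos h1, if_pos h2, if_pos (Nat.zero_le _), if_pos h1]
    have e2 : m + 2 + 1 - 2 = m + 1 := by omega
    have e3 : m + 2 + 1 - 3 = m := by omega
    have e1 : m + 2 + 1 - 1 = m + 2 := by omega
    have e0 : m + 2 + 1 - 0 = m + 3 := by omega
    rw [e2, e3, e1, e0]
    push_cast
    ring

lemma coeff_Lop_zero (f : ℚ⟦X⟧) : coeff (R := ℚ) 0 (Lop f) = 2 * coeff (R := ℚ) 0 f := by
  rw [Lop_expand, map_add, map_add, map_sub, map_sub, map_sub]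
  simp only [coeff_CXk]
  norm_num

lemma Lop_unique {f h : ℚ⟦X⟧} (hf : Lop f = 2) (hh : Lop h = 2)
    (h0 : coeff (R := ℚ) 0 f = coeff (R := ℚ) 0 h) : f = h := by
  ext n
  induction n using Nat.strong_induction_on with
  | _ n ih =>
    match n with
    | 0 => exact h0
    | n+1 =>
      have hfc := congrArg (coeff (R := ℚ) (n+1)) hf
      have hhc := congrArg (coeff (R := ℚ) (n+1)) hh
      rw [coeff_Lop] at hfc hhc
      have hn : coeff (R := ℚ) n f = coeff (R := ℚ) n h := ih n (by omega)
      have hpos : (2*((n:ℚ)+2)*(2*(n:ℚ)+3) : ℚ) ≠ 0 := by positivity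
      have key : 2*((n:ℚ)+2)*(2*(n:ℚ)+3) * coeff (R := ℚ) (n+1) f
          = 2*((n:ℚ)+2)*(2*(n:ℚ)+3) * coeff (R := ℚ) (n+1) h := by
        linear_combination hfc - hhc + (3*(3*(n:ℚ)+2)*(3*(n:ℚ)+4)) * hn
      exact mul_left_cancel₀ hpos key



lemma fact3 (m : ℕ) : (m+3)! = ((m+3)*(m+2)*(m+1)) * m ! := by
  simp [Nat.factorial_succ]; ring

lemma fact2 (m : ℕ) : (m+2)! = ((m+2)*(m+1)) * m ! := by
  simp [Nat.factorial_succ]; ring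

lemma choose_id (n : ℕ) :
    2*(2*(n:ℚ)+3)*((n:ℚ)+1) * (Nat.choose (3*n+4) (n+1) : ℚ)
      = 3*(3*(n:ℚ)+2)*(3*(n:ℚ)+4) * (Nat.choose (3*n+1) n : ℚ) := by
  have h1 : (n+1) ≤ 3*n+4 := by omega
  have h2 : n ≤ 3*n+1 := by omega
  rw [Nat.cast_choose ℚ h1, Nat.cast_choose ℚ h2]
  have e1 : 3*n+4 - (n+1) = 2*n+3 := by omega
  have e2 : 3*n+1 - n = 2*n+1 := by omega
  rw [e1, e2]
  rw [show 3*n+4 = (3*n+1)+3 from by ring, fact3 (3*n+1),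
      show 2*n+3 = (2*n+1)+2 from by ring, fact2 (2*n+1),
      Nat.factorial_succ n]
  have hf1 : ((3*n+1)! : ℚ) ≠ 0 := Nat.cast_ne_zero.mpr (Nat.factorial_ne_zero _)
  have hf2 : ((2*n+1)! : ℚ) ≠ 0 := Nat.cast_ne_zero.mpr (Nat.factorial_ne_zero _)
  have hf3 : ((n)! : ℚ) ≠ 0 := Nat.cast_ne_zero.mpr (Nat.factorial_ne_zero _)
  have hn1 : ((n:ℚ)+1) ≠ 0 := by positivity
  have hn2 : (2*(n:ℚ)+2) ≠ 0 := by positivity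
  have hn3 : (2*(n:ℚ)+3) ≠ 0 := by positivity
  push_cast
  field_simp
  ring

lemma Lop_T : Lop T = 2 := by
  ext n
  cases n with
  | zero =>
    rw [coeff_Lop_zero]
    simp [T, coeff_mk, coeff_zero_eq_constantCoeff, map_ofNat]
  | succ n =>
    rw [coeff_Lop]
    have h2 : coeff (R := ℚ) (n+1) (2 : ℚ⟦X⟧) = 0 := by
      rw [← map_ofNat (C (R := ℚ)) 2, coeff_C]
      simp
    rw [h2, T, coeff_mk, coeff_mk]
    rw [show 3*(n+1)+1 = 3*n+4 from by ring]
    have hn1 : ((n:ℚ)+1) ≠ 0 := by positivity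
    have hn2 : ((n:ℚ)+1+1) ≠ 0 := by positivity
    push_cast
    rw [sub_eq_zero, ← mul_div_assoc, ← mul_div_assoc, div_eq_div_iff hn2 hn1]
    linear_combination ((n:ℚ)+2) * choose_id n

lemma Lop_GG : Lop GG = 2 := by
  simpa only [Lop, G2, G1] using GG_ode

lemma GG_eq_T : GG = T := by
  refine Lop_unique Lop_GG Lop_T ?_
  simp [coeff_GG, gg_zero, T, coeff_mk]

theorem stmt_4 : T = 1 + 2 * X * T ^ 2 - X ^ 2 * T ^ 3 := by
  have h := GG_cubic
  rw [GG_eq_T] at h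
  exact h
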